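/- Suppose v : ℝ^S × Δ^S → ℝ^S satisfies positive correlation, F is a heterogeneous potential game with potential f, and t ↦ X_t is a solution trajectory of the heterogeneous dynamic with density x_t. Then t ↦ f(X_t) is nondecreasing, since d/dt f(X_t) = ∫_Θ F[X_t](θ) · v(F[X_t](θ), x_t(θ)) ℙ_Θ(dθ) ≥ 0, and it is strictly increasing at any time t at which v(F[X_t](θ), x_t(θ)) ≠ 0 on a set of types of positive ℙ_Θ-measure. -/
import Mathlib


open Finset MeasureTheory

/-- Under positive correlation, the potential value is nondecreasing along a
solution trajectory of the heterogeneous dynamic, and its derivative is strictly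
positive whenever a positive mass of types is not at rest. -/
theorem stmt15 {S : Type*} [Fintype S] {Θ : Type*} [MeasurableSpace Θ]
    (P : Measure Θ) [IsProbabilityMeasure P]
    (v : (S → ℝ) → (S → ℝ) → (S → ℝ))
    (hPC : ∀ (π x0 : S → ℝ), x0 ∈ stdSimplex ℝ S →
      0 ≤ ∑ s, π s * v π x0 s ∧ (v π x0 ≠ 0 → 0 < ∑ s, π s * v π x0 s))
    (x : ℝ → Θ → S → ℝ) (hx : ∀ t θ, x t θ ∈ stdSimplex ℝ S)
    (Fpay : ℝ → Θ → S → ℝ)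
    (hint : ∀ t, Integrable (fun θ => ∑ s, Fpay t θ s * v (Fpay t θ) (x t θ) s) P)
    (f : ℝ → ℝ)
    (hderiv : ∀ t, HasDerivAt f
      (∫ θ, ∑ s, Fpay t θ s * v (Fpay t θ) (x t θ) s ∂P) t) :
    MonotoneOn f (Set.Ici 0) ∧
    ∀ t : ℝ, 0 ≤ t → 0 < P {θ | v (Fpay t θ) (x t θ) ≠ 0} →
      0 < ∫ θ, ∑ s, Fpay t θ s * v (Fpay t θ) (x t θ) s ∂P := by
  have hnn : ∀ t θ, 0 ≤ ∑ s, Fpay t θ s * v (Fpay t θ) (x t θ) s :=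
    fun t θ => (hPC (Fpay t θ) (x t θ) (hx t θ)).1
  constructor
  · apply monotoneOn_of_deriv_nonneg (convex_Ici 0)
      (fun t _ => (hderiv t).continuousAt.continuousWithinAt)
      (fun t _ => ((hderiv t).differentiableAt).differentiableWithinAt)
    intro t _
    rw [(hderiv t).deriv]
    exact integral_nonneg (fun θ => hnn t θ)
  · intro t _ hpos
    rw [integral_pos_iff_support_of_nonneg (fun θ => hnn t θ) (hint t)]
    refine lt_of_lt_of_le hpos (measure_mono ?_)
    intro θ hθ
    exact ne_of_gt ((hPC (Fpay t θ) (x t θ) (hx t θ)).2 hθ)
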